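/- For one-dimensional Laplace distributions Lap(w₁,b) and Lap(w₂,b) with v=w₁-w₂, the squared Hellinger distance equals 2(1 - e^{-|v|/(2b)}(1 + |v|/(2b))). -/

import Mathlib

open MeasureTheory Set

/-- Density of the Laplace distribution `Lap(w, b)` on `ℝ`. -/
noncomputable def laplacePDF (w b : ℝ) : ℝ → ℝ :=
  fun x => (1 / (2 * b)) * Real.exp (-|x - w| / b)

namespace HellingerAux

open Real

lemma integral_exp_neg_mul_Ioi {k : ℝ} (hk : 0 < k) (a : ℝ) :
    ∫ x in Ioi a, Real.exp (-(k * x)) = Real.exp (-(k * a)) / k := by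
  have h := integral_comp_mul_left_Ioi (fun y => Real.exp (-y)) a hk
  simp only [smul_eq_mul] at h
  rw [integral_exp_neg_Ioi] at h
  rw [h, inv_mul_eq_div]

lemma integrableOn_exp_neg_mul_Ioi {k : ℝ} (hk : 0 < k) (a : ℝ) :
    IntegrableOn (fun x => Real.exp (-(k * x))) (Ioi a) := by
  simpa [neg_mul] using exp_neg_integrableOn_Ioi a hk

lemma integrableOn_Iic_comp_neg {f : ℝ → ℝ} {a : ℝ} (hf : IntegrableOn f (Ioi (-a))) :
    IntegrableOn (fun x => f (-x)) (Iic a) := by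
  have m : MeasurableEmbedding fun x : ℝ => -x := (Homeomorph.neg ℝ).measurableEmbedding
  rw [← Measure.map_neg_eq_self (volume : Measure ℝ), m.integrableOn_map_iff]
  simp_rw [Function.comp_def, neg_neg, neg_preimage, neg_Iic]
  exact (integrableOn_Ici_iff_integrableOn_Ioi).mpr hf

lemma integrableOn_exp_mul_Iic {k : ℝ} (hk : 0 < k) (a : ℝ) :
    IntegrableOn (fun x => Real.exp (k * x)) (Iic a) := by
  have := integrableOn_Iic_comp_neg (a := a)
    (f := fun x => Real.exp (-(k * x))) (integrableOn_exp_neg_mul_Ioi hk (-a))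
  simpa [mul_neg, neg_neg] using this

lemma integral_exp_mul_Iic {k : ℝ} (hk : 0 < k) (a : ℝ) :
    ∫ x in Iic a, Real.exp (k * x) = Real.exp (k * a) / k := by
  have h := integral_comp_neg_Ioi (-a) (fun x => Real.exp (k * x))
  simp only [mul_neg, neg_neg, ← neg_mul_eq_mul_neg] at h
  rw [← h]
  have h2 := integral_exp_neg_mul_Ioi hk (-a)
  simp only [mul_neg, neg_neg] at h2 ⊢
  rw [h2]

lemma integrable_exp_neg_mul_abs_zero {k : ℝ} (hk : 0 < k) :
    Integrable (fun x : ℝ => Real.exp (-(k * |x|))) := by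
  rw [← integrableOn_univ, ← Iic_union_Ioi (a := (0 : ℝ))]
  apply IntegrableOn.union
  · exact (integrableOn_exp_mul_Iic hk 0).congr_fun
      (fun x hx => by rw [abs_of_nonpos hx]; ring_nf) measurableSet_Iic
  · exact (integrableOn_exp_neg_mul_Ioi hk 0).congr_fun
      (fun x hx => by rw [abs_of_pos hx]) measurableSet_Ioi

lemma integrable_exp_neg_mul_abs {k : ℝ} (hk : 0 < k) (w : ℝ) :
    Integrable (fun x : ℝ => Real.exp (-(k * |x - w|))) :=
  (integrable_exp_neg_mul_abs_zero hk).comp_sub_right w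

lemma integral_exp_neg_mul_abs {k : ℝ} (hk : 0 < k) (w : ℝ) :
    ∫ x : ℝ, Real.exp (-(k * |x - w|)) = 2 / k := by
  rw [integral_sub_right_eq_self (fun y => Real.exp (-(k * |y|))) w]
  have h := integral_comp_abs (f := fun y => Real.exp (-(k * y)))
  rw [h, integral_exp_neg_mul_Ioi hk 0, mul_zero, neg_zero, Real.exp_zero]
  ring

/-- Integrability of the cross term, centered, `v ≥ 0` case. -/
lemma integrable_cross_nonneg {c v : ℝ} (hc : 0 < c) (hv : 0 ≤ v) :
    Integrable (fun x : ℝ => Real.exp (-((|x - v| + |x|) / c))) := by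
  rw [← integrableOn_univ, ← Iic_union_Ioi (a := (0 : ℝ))]
  have h2c : 0 < 2 / c := by positivity
  apply IntegrableOn.union
  · exact IntegrableOn.congr_fun ((integrableOn_exp_mul_Iic h2c 0).const_mul (Real.exp (-(v / c))))
      (fun x hx => by
        rw [← Real.exp_add, abs_of_nonpos (by simp at hx; linarith : x - v ≤ 0),
          abs_of_nonpos (by simpa using hx)]
        congr 1; field_simp; ring) measurableSet_Iic
  · rw [← Ioc_union_Ioi_eq_Ioi hv]
    apply IntegrableOn.union
    · refine IntegrableOn.congr_fun
        (f := fun _ : ℝ => Real.exp (-(v / c)))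
        (integrableOn_const measure_Ioc_lt_top.ne)
        (fun x hx => ?_) measurableSet_Ioc
      rw [abs_of_nonpos (by simp at hx; linarith [hx.2] : x - v ≤ 0),
        abs_of_pos (by exact hx.1)]
      congr 1; ring_nf
    · exact IntegrableOn.congr_fun ((integrableOn_exp_neg_mul_Ioi h2c v).const_mul (Real.exp (v / c)))
        (fun x hx => by
          rw [← Real.exp_add, abs_of_nonneg (by simp at hx; linarith : (0:ℝ) ≤ x - v),
            abs_of_pos (by simp at hx; linarith : (0:ℝ) < x)]
          congr 1; field_simp; ring) measurableSet_Ioi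

/-- Value of the cross integral, centered, `v ≥ 0` case. -/
lemma integral_cross_nonneg {c v : ℝ} (hc : 0 < c) (hv : 0 ≤ v) :
    ∫ x : ℝ, Real.exp (-((|x - v| + |x|) / c)) = Real.exp (-(v / c)) * (c + v) := by
  have h2c : 0 < 2 / c := by positivity
  have hI1 : IntegrableOn (fun x : ℝ => Real.exp (-((|x - v| + |x|) / c))) (Iic 0) :=
    (integrable_cross_nonneg hc hv).integrableOn
  have hI2 : IntegrableOn (fun x : ℝ => Real.exp (-((|x - v| + |x|) / c))) (Ioc 0 v) :=
    (integrable_cross_nonneg hc hv).integrableOn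
  have hI3 : IntegrableOn (fun x : ℝ => Real.exp (-((|x - v| + |x|) / c))) (Ioi v) :=
    (integrable_cross_nonneg hc hv).integrableOn
  have hI23 : IntegrableOn (fun x : ℝ => Real.exp (-((|x - v| + |x|) / c))) (Ioi 0) :=
    (integrable_cross_nonneg hc hv).integrableOn
  rw [← intervalIntegral.integral_Iic_add_Ioi (b := 0) hI1 hI23,
    ← Ioc_union_Ioi_eq_Ioi hv,
    setIntegral_union (Ioc_disjoint_Ioi le_rfl) measurableSet_Ioi hI2 hI3]
  have e1 : ∫ x in Iic (0:ℝ), Real.exp (-((|x - v| + |x|) / c))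
      = Real.exp (-(v / c)) * (c / 2) := by
    rw [setIntegral_congr_fun measurableSet_Iic
      (g := fun x => Real.exp (-(v / c)) * Real.exp ((2 / c) * x))
      (fun x hx => by
        simp only [← Real.exp_add]
        rw [abs_of_nonpos (by simp at hx; linarith : x - v ≤ 0),
          abs_of_nonpos (by simpa using hx)]
        congr 1; field_simp; ring)]
    rw [MeasureTheory.integral_const_mul, integral_exp_mul_Iic h2c 0]
    rw [mul_zero, Real.exp_zero]
    congr 1
    field_simp
  have e2 : ∫ x in Ioc (0:ℝ) v, Real.exp (-((|x - v| + |x|) / c))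
      = Real.exp (-(v / c)) * v := by
    rw [setIntegral_congr_fun measurableSet_Ioc
      (g := fun _ => Real.exp (-(v / c)))
      (fun x hx => by
        rw [abs_of_nonpos (by simp at hx; linarith [hx.2] : x - v ≤ 0), abs_of_pos hx.1]
        congr 1
        ring)]
    rw [setIntegral_const, smul_eq_mul, Real.volume_real_Ioc_of_le hv]
    ring
  have e3 : ∫ x in Ioi v, Real.exp (-((|x - v| + |x|) / c))
      = Real.exp (-(v / c)) * (c / 2) := by
    rw [setIntegral_congr_fun measurableSet_Ioi
      (g := fun x => Real.exp (v / c) * Real.exp (-((2 / c) * x)))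
      (fun x hx => by
        simp only [← Real.exp_add]
        rw [abs_of_nonneg (by simp at hx; linarith : (0:ℝ) ≤ x - v),
          abs_of_pos (by simp at hx; linarith : (0:ℝ) < x)]
        congr 1; field_simp; ring)]
    rw [MeasureTheory.integral_const_mul, integral_exp_neg_mul_Ioi h2c v]
    have key : Real.exp (v / c) * Real.exp (-(2 / c * v)) = Real.exp (-(v / c)) := by
      rw [← Real.exp_add]; congr 1; field_simp; ring
    rw [mul_div_assoc', key, div_div_eq_mul_div, mul_div_assoc]
  rw [e1, e2, e3]
  ring

/-- Integrability of the cross term, centered, all `v`. -/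
lemma integrable_cross {c : ℝ} (hc : 0 < c) (v : ℝ) :
    Integrable (fun x : ℝ => Real.exp (-((|x - v| + |x|) / c))) := by
  rcases le_or_gt 0 v with hv | hv
  · exact integrable_cross_nonneg hc hv
  · have h := (integrable_cross_nonneg hc (by linarith : (0:ℝ) ≤ -v)).comp_neg
    refine h.congr (Filter.Eventually.of_forall fun x => ?_)
    simp only
    rw [show -x - -v = -(x - v) by ring, abs_neg, abs_neg]

/-- Value of the cross integral, centered, all `v`. -/
lemma integral_cross {c : ℝ} (hc : 0 < c) (v : ℝ) :
    ∫ x : ℝ, Real.exp (-((|x - v| + |x|) / c)) = Real.exp (-(|v| / c)) * (c + |v|) := by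
  rcases le_or_gt 0 v with hv | hv
  · rw [abs_of_nonneg hv]; exact integral_cross_nonneg hc hv
  · have h := integral_cross_nonneg hc (by linarith : (0:ℝ) ≤ -v)
    rw [abs_of_neg hv]
    rw [← h, ← integral_neg_eq_self]
    congr 1
    funext x
    rw [show -x - v = -(x - -v) by ring, show (-x : ℝ) = -(x) by ring, abs_neg, abs_neg]

end HellingerAux

open HellingerAux

/-- The squared Hellinger distance between `Lap(w₁,b)` and `Lap(w₂,b)` with `v = w₁ - w₂`
equals `2 (1 - e^{-|v|/(2b)} (1 + |v|/(2b)))`. -/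
theorem hellinger_laplace (b : ℝ) (hb : 0 < b) (w₁ w₂ : ℝ) :
    (∫ x : ℝ, (Real.sqrt (laplacePDF w₁ b x) - Real.sqrt (laplacePDF w₂ b x)) ^ 2) =
      2 * (1 - Real.exp (-|w₁ - w₂| / (2 * b)) * (1 + |w₁ - w₂| / (2 * b))) := by
  set v : ℝ := w₁ - w₂ with hv
  have hb2 : (0:ℝ) < 2 * b := by linarith
  have hbinv : (0:ℝ) < b⁻¹ := by positivity
  -- pointwise form of the integrand
  have hsq : ∀ w x, Real.sqrt (laplacePDF w b x)
      = Real.sqrt (1 / (2 * b)) * Real.exp (-(|x - w| / (2 * b))) := by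
    intro w x
    unfold laplacePDF
    rw [Real.sqrt_mul (by positivity), ← Real.exp_half,
      show -|x - w| / b / 2 = -(|x - w| / (2 * b)) by ring]
  have hkey : ∀ x : ℝ,
      (Real.sqrt (laplacePDF w₁ b x) - Real.sqrt (laplacePDF w₂ b x)) ^ 2
      = laplacePDF w₁ b x + laplacePDF w₂ b x
        - 2 * ((1 / (2 * b)) * Real.exp (-((|x - w₁| + |x - w₂|) / (2 * b)))) := by
    intro x
    have h1 : Real.sqrt (laplacePDF w₁ b x) ^ 2 = laplacePDF w₁ b x :=
      Real.sq_sqrt (by unfold laplacePDF; positivity)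
    have h2 : Real.sqrt (laplacePDF w₂ b x) ^ 2 = laplacePDF w₂ b x :=
      Real.sq_sqrt (by unfold laplacePDF; positivity)
    have h3 : Real.sqrt (laplacePDF w₁ b x) * Real.sqrt (laplacePDF w₂ b x)
        = (1 / (2 * b)) * Real.exp (-((|x - w₁| + |x - w₂|) / (2 * b))) := by
      rw [hsq, hsq]
      rw [show Real.sqrt (1 / (2 * b)) * Real.exp (-(|x - w₁| / (2 * b)))
          * (Real.sqrt (1 / (2 * b)) * Real.exp (-(|x - w₂| / (2 * b))))
          = (Real.sqrt (1 / (2 * b)) * Real.sqrt (1 / (2 * b)))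
            * (Real.exp (-(|x - w₁| / (2 * b))) * Real.exp (-(|x - w₂| / (2 * b)))) by ring]
      rw [Real.mul_self_sqrt (by positivity), ← Real.exp_add]
      congr 1
      ring
    rw [sub_sq, h1, h2, mul_assoc, h3]
    ring
  rw [show (fun x : ℝ => (Real.sqrt (laplacePDF w₁ b x) - Real.sqrt (laplacePDF w₂ b x)) ^ 2)
      = fun x : ℝ => laplacePDF w₁ b x + laplacePDF w₂ b x
        - 2 * ((1 / (2 * b)) * Real.exp (-((|x - w₁| + |x - w₂|) / (2 * b))))
    from funext hkey]
  -- integrability facts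
  have hpdf_eq : ∀ w : ℝ, laplacePDF w b
      = fun x => (1 / (2 * b)) * Real.exp (-(b⁻¹ * |x - w|)) := by
    intro w
    funext x
    unfold laplacePDF
    congr 1
    field_simp
  have hpdf_int : ∀ w : ℝ, Integrable (laplacePDF w b) := by
    intro w
    rw [hpdf_eq w]
    exact (integrable_exp_neg_mul_abs hbinv w).const_mul _
  have hpdf_val : ∀ w : ℝ, ∫ x : ℝ, laplacePDF w b x = 1 := by
    intro w
    rw [hpdf_eq w]
    rw [MeasureTheory.integral_const_mul, integral_exp_neg_mul_abs hbinv w]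
    field_simp
  -- cross term
  have hcross_shift : (fun x : ℝ => Real.exp (-((|x - w₁| + |x - w₂|) / (2 * b))))
      = (fun x : ℝ => (fun y : ℝ => Real.exp (-((|y - v| + |y|) / (2 * b)))) (x - w₂)) := by
    funext x
    simp only
    rw [show x - w₂ - v = x - w₁ by rw [hv]; ring]
  have hcross_int : Integrable
      (fun x : ℝ => Real.exp (-((|x - w₁| + |x - w₂|) / (2 * b)))) := by
    rw [hcross_shift]
    exact (integrable_cross hb2 v).comp_sub_right w₂
  have hcross_val : ∫ x : ℝ, Real.exp (-((|x - w₁| + |x - w₂|) / (2 * b)))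
      = Real.exp (-(|v| / (2 * b))) * (2 * b + |v|) := by
    rw [hcross_shift,
      integral_sub_right_eq_self (fun y : ℝ => Real.exp (-((|y - v| + |y|) / (2 * b)))) w₂,
      integral_cross hb2 v]
  have hadd : Integrable (fun x : ℝ => laplacePDF w₁ b x + laplacePDF w₂ b x) :=
    (hpdf_int w₁).add (hpdf_int w₂)
  have hmul : Integrable (fun x : ℝ =>
      2 * ((1 / (2 * b)) * Real.exp (-((|x - w₁| + |x - w₂|) / (2 * b))))) :=
    (hcross_int.const_mul (1 / (2 * b))).const_mul 2
  rw [integral_sub hadd hmul,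
    integral_add (hpdf_int w₁) (hpdf_int w₂), hpdf_val, hpdf_val,
    MeasureTheory.integral_const_mul, MeasureTheory.integral_const_mul, hcross_val]
  rw [show -|w₁ - w₂| / (2 * b) = -(|v| / (2 * b)) by rw [hv]; ring]
  field_simp
  ring
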